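/- The query language of warded sets of TGDs with conjunctive queries is strictly more expressive than Datalog with respect to program expressive power: DATALOG <_pep (WARD, CQ). -/

import Mathlib

/-! ### Core: terms, atoms, TGDs, CQs, certain answers -/

/-- Terms: constants ⊕ nulls ⊕ variables (each indexed by a natural number). -/
abbrev Term' : Type := ℕ ⊕ ℕ ⊕ ℕ

/-- The constant `n`. -/
def Term'.cst (n : ℕ) : Term' := Sum.inl n
/-- The labeled null `n`. -/
def Term'.nul (n : ℕ) : Term' := Sum.inr (Sum.inl n)
/-- The variable `n`. -/
def Term'.var (n : ℕ) : Term' := Sum.inr (Sum.inr n)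

def Term'.isVarB : Term' → Bool
  | Sum.inr (Sum.inr _) => true
  | _ => false

def Term'.isConstB : Term' → Bool
  | Sum.inl _ => true
  | _ => false

def Term'.isNullB : Term' → Bool
  | Sum.inr (Sum.inl _) => true
  | _ => false

/-- A (relational) atom: a predicate symbol together with a list of argument terms. -/
abbrev Atom : Type := ℕ × List Term'

/-- Apply a substitution to an atom. -/
def mapAtom (h : Term' → Term') (a : Atom) : Atom := (a.1, a.2.map h)

/-- A substitution is the identity on constants. -/
def constPres (h : Term' → Term') : Prop := ∀ n, h (Term'.cst n) = Term'.cst n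

/-- The variable `v` occurs in the set of atoms `A`. -/
def occursIn (A : Finset Atom) (v : ℕ) : Prop := ∃ a ∈ A, Term'.var v ∈ a.2

/-- A fact is an atom that contains only constants. -/
def isFact (a : Atom) : Prop := ∀ t ∈ a.2, Term'.isConstB t = true

/-- A tuple-generating dependency (TGD) `body → ∃ z̄ head`; the existentially
quantified variables are exactly the head variables not occurring in the body. -/
structure TGD where
  body : Finset Atom
  head : Finset Atom
deriving DecidableEq

/-- A TGD is well-formed if its body and head contain only variables
(no constants and no nulls). -/
def TGD.wf (σ : TGD) : Prop := ∀ a ∈ σ.body ∪ σ.head, ∀ t ∈ a.2, Term'.isVarB t = true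

/-- `v` is an existentially quantified variable of `σ`. -/
def isExistVar (σ : TGD) (v : ℕ) : Prop := occursIn σ.head v ∧ ¬ occursIn σ.body v

/-- An instance `I` (a set of atoms) satisfies a TGD: every homomorphism of the body
into `I` extends (on the body variables, in particular on the frontier) to a
homomorphism of the head into `I`. -/
def satTGD (I : Set Atom) (σ : TGD) : Prop :=
  ∀ h : Term' → Term', constPres h → (∀ a ∈ σ.body, mapAtom h a ∈ I) →
    ∃ h' : Term' → Term', constPres h' ∧
      (∀ v, occursIn σ.body v → h' (Term'.var v) = h (Term'.var v)) ∧
      (∀ a ∈ σ.head, mapAtom h' a ∈ I)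

/-- A conjunctive query: a tuple of output terms and a finite set of body atoms. -/
structure CQ where
  output : List Term'
  atoms : Finset Atom
deriving DecidableEq

/-- Well-formed CQ: no nulls in the atoms, and the output tuple consists of variables. -/
def CQ.wf (q : CQ) : Prop :=
  (∀ a ∈ q.atoms, ∀ t ∈ a.2, Term'.isNullB t = false) ∧
  (∀ t ∈ q.output, Term'.isVarB t = true)

/-- The evaluation `q(I)` of a CQ over an instance: all tuples of constants obtained as
homomorphic images of the output tuple. -/
def CQ.eval (q : CQ) (I : Set Atom) : Set (List ℕ) :=
  { c | ∃ h : Term' → Term', constPres h ∧ (∀ a ∈ q.atoms, mapAtom h a ∈ I) ∧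
        q.output.map h = c.map Term'.cst }

/-- The certain answers to `q` w.r.t. the database `D` and the set `S` of TGDs. -/
def cert (q : CQ) (D : Finset Atom) (S : Finset TGD) : Set (List ℕ) :=
  { c | ∀ I : Set Atom, ↑D ⊆ I → (∀ σ ∈ S, satTGD I σ) → c ∈ q.eval I }

/-- The active domain of a database: all constants occurring in it. -/
def adom (D : Finset Atom) : Set ℕ := { n | ∃ a ∈ D, Term'.cst n ∈ a.2 }

/-! ### Wardedness, piece-wise linearity, predicate levels -/

/-- The predicate `p` occurs in the set of atoms `A`. -/
def occursPredIn (A : Finset Atom) (p : ℕ) : Prop := ∃ a ∈ A, a.1 = p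

/-- The affected positions of (the schema of) `S`: `Affected S p i` says that the
`i`-th position of predicate `p` is affected. -/
inductive Affected (S : Finset TGD) : ℕ → ℕ → Prop
  | base (σ : TGD) (hσ : σ ∈ S) (v : ℕ) (hv : isExistVar σ v)
      (a : Atom) (ha : a ∈ σ.head) (i : ℕ) (hi : a.2[i]? = some (Term'.var v)) :
      Affected S a.1 i
  | step (σ : TGD) (hσ : σ ∈ S) (v : ℕ)
      (hb : occursIn σ.body v) (hh : occursIn σ.head v)
      (hall : ∀ b ∈ σ.body, ∀ j : ℕ, b.2[j]? = some (Term'.var v) → Affected S b.1 j)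
      (a : Atom) (ha : a ∈ σ.head) (i : ℕ) (hi : a.2[i]? = some (Term'.var v)) :
      Affected S a.1 i

/-- A body variable of `σ` is harmless if at least one of its occurrences in the body
is at a non-affected position. -/
def harmless (S : Finset TGD) (σ : TGD) (v : ℕ) : Prop :=
  ∃ b ∈ σ.body, ∃ i : ℕ, b.2[i]? = some (Term'.var v) ∧ ¬ Affected S b.1 i

/-- A body variable is dangerous if it is harmful (not harmless) and is a frontier
variable (it occurs in the head). -/
def dangerous (S : Finset TGD) (σ : TGD) (v : ℕ) : Prop :=
  occursIn σ.body v ∧ occursIn σ.head v ∧ ¬ harmless S σ v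

/-- `S` is warded: each TGD either has no dangerous body variables, or has a body atom
(a ward) containing all dangerous variables and sharing only harmless variables with
the rest of the body. -/
def Warded (S : Finset TGD) : Prop :=
  ∀ σ ∈ S, (∀ v, ¬ dangerous S σ v) ∨
    ∃ α ∈ σ.body, (∀ v, dangerous S σ v → Term'.var v ∈ α.2) ∧
      (∀ v, Term'.var v ∈ α.2 → occursIn (σ.body.erase α) v → harmless S σ v)

/-- Edge of the predicate graph of `S`. -/
def pgEdge (S : Finset TGD) (p r : ℕ) : Prop :=
  ∃ σ ∈ S, occursPredIn σ.body p ∧ occursPredIn σ.head r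

/-- Two predicates are mutually recursive if they lie on a common cycle of the
predicate graph. -/
def mutRec (S : Finset TGD) (p r : ℕ) : Prop :=
  Relation.TransGen (pgEdge S) p r ∧ Relation.TransGen (pgEdge S) r p

/-- `S` is piece-wise linear: each TGD has at most one body atom whose predicate is
mutually recursive with a predicate of its head. -/
def PWL (S : Finset TGD) : Prop :=
  ∀ σ ∈ S, ∀ α ∈ σ.body, ∀ β ∈ σ.body,
    (∃ γ ∈ σ.head, mutRec S α.1 γ.1) → (∃ γ ∈ σ.head, mutRec S β.1 γ.1) → α = β

/-- Every TGD of `S` has exactly one head atom. -/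
def singleHead (S : Finset TGD) : Prop := ∀ σ ∈ S, σ.head.card = 1

/-- The predicates occurring in `S` (as a set). -/
def schP (S : Finset TGD) : Set ℕ :=
  { p | ∃ σ ∈ S, occursPredIn σ.body p ∨ occursPredIn σ.head p }

/-- The predicates occurring in `S` (as a finite set). -/
def schF (S : Finset TGD) : Finset ℕ :=
  S.sup (fun σ => (σ.body ∪ σ.head).image (fun a => a.1))

/-- `lvl` is the (unique) level function of `S`:
`lvl p = max { lvl r | (r,p) an edge of the predicate graph, r not mutually recursive
with p } + 1` (with `max ∅ = 0`). -/
def IsLevelFn (S : Finset TGD) (lvl : ℕ → ℕ) : Prop :=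
  ∀ p ∈ schP S,
    (∀ r, pgEdge S r p → ¬ mutRec S r p → lvl r < lvl p) ∧
    (lvl p = 1 ∨ ∃ r, pgEdge S r p ∧ ¬ mutRec S r p ∧ lvl p = lvl r + 1)

/-- The maximal body size of a TGD of `S`. -/
def maxBody (S : Finset TGD) : ℕ := S.sup (fun σ => σ.body.card)

/-- `f_{WARD∩PWL}(n, S) = (n+1) · max_{P ∈ sch(S)} level(P) · max_{σ ∈ S} |body(σ)|`,
where `n` is the number of atoms of the CQ (resp. the cardinality of the atom set). -/
def fWardPwl (n : ℕ) (S : Finset TGD) (lvl : ℕ → ℕ) : ℕ :=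
  (n + 1) * (schF S).sup lvl * maxBody S

/-- `f_{WARD}(n, S) = 2 · max (n, max_{σ ∈ S} |body(σ)|)`. -/
def fWard (n : ℕ) (S : Finset TGD) : ℕ := 2 * max n (maxBody S)

/-! ### Query languages and expressive power -/

/-- The extensional (database) schema of `S`: the predicates of `sch(S)` not occurring
in any head of `S`. -/
def edbP (S : Finset TGD) : Set ℕ :=
  { p | p ∈ schP S ∧ ∀ σ ∈ S, ¬ occursPredIn σ.head p }

/-- The database `D` is over the set `E` of predicates (and consists of facts). -/
def DBover (D : Finset Atom) (E : Set ℕ) : Prop :=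
  (∀ a ∈ D, isFact a) ∧ (∀ a ∈ D, a.1 ∈ E)

/-- The CQ `q` is over the set `P` of predicates. -/
def CQover (q : CQ) (P : Set ℕ) : Prop := ∀ a ∈ q.atoms, a.1 ∈ P

/-- A query: a (finite) set of TGDs together with a CQ. -/
abbrev Query : Type := Finset TGD × CQ

/-- A well-formed query: the TGDs contain only variables, the CQ is well-formed and
over the schema of the TGDs. -/
def wfQuery (Q : Query) : Prop :=
  (∀ σ ∈ Q.1, TGD.wf σ) ∧ CQ.wf Q.2 ∧ CQover Q.2 (schP Q.1)

/-- The (combined) expressive power of a query `Q = (Σ, q)`: all pairs `(D, c̄)` with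
`D` a database over `edb(Σ)` and `c̄ ∈ adom(D)^{|x̄|}` a certain answer. -/
def ep (Q : Query) : Set (Finset Atom × List ℕ) :=
  { Dc | DBover Dc.1 (edbP Q.1) ∧ Dc.2.length = Q.2.output.length ∧
         (∀ n ∈ Dc.2, n ∈ adom Dc.1) ∧ Dc.2 ∈ cert Q.2 Dc.1 Q.1 }

/-- The combined expressive power of a query language. -/
def cep (L : Set Query) : Set (Set (Finset Atom × List ℕ)) := ep '' L

/-- `L1 ≤_cep L2`. -/
def cepLE (L1 L2 : Set Query) : Prop := cep L1 ⊆ cep L2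

/-- `Q` and `Q'` are equivalent: they evaluate to the same certain answers on every
database over the common extensional schema. -/
def queryEquivOn (Q Q' : Query) : Prop :=
  ∀ D : Finset Atom, DBover D (edbP Q.1 ∩ edbP Q'.1) → cert Q.2 D Q.1 = cert Q'.2 D Q'.1

/-- `L1 ⪯ L2`: every query of `L1` can be equivalently rewritten as a query of `L2`. -/
def langLE (L1 L2 : Set Query) : Prop := ∀ Q ∈ L1, ∃ Q' ∈ L2, queryEquivOn Q Q'

/-- The class of sets of full single-head TGDs (Datalog programs). -/
def FULL1 : Set (Finset TGD) :=
  { S | (∀ σ ∈ S, TGD.wf σ) ∧ ∀ σ ∈ S, σ.head.card = 1 ∧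
        ∀ v, occursIn σ.head v → occursIn σ.body v }

/-- The class of warded sets of TGDs. -/
def WARDc : Set (Finset TGD) := { S | (∀ σ ∈ S, TGD.wf σ) ∧ Warded S }

/-- The class of piece-wise linear sets of TGDs. -/
def PWLc : Set (Finset TGD) := { S | (∀ σ ∈ S, TGD.wf σ) ∧ PWL S }

/-- The query language `(C, CQ)` based on a class `C` of sets of TGDs. -/
def langOf (C : Set (Finset TGD)) : Set Query :=
  { Q | Q.1 ∈ C ∧ CQ.wf Q.2 ∧ CQover Q.2 (schP Q.1) }

/-- The (program) expressive power of a set `S` of TGDs: all triples `(D, q, c̄)` with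
`D` a database over `edb(S)`, `q` a CQ over `sch(S)`, and `c̄ ∈ adom(D)^{|x̄|}` a
certain answer. -/
def epP (S : Finset TGD) : Set (Finset Atom × CQ × List ℕ) :=
  { x | DBover x.1 (edbP S) ∧ CQ.wf x.2.1 ∧ CQover x.2.1 (schP S) ∧
        x.2.2.length = x.2.1.output.length ∧ (∀ n ∈ x.2.2, n ∈ adom x.1) ∧
        x.2.2 ∈ cert x.2.1 x.1 S }

/-- The program expressive power of the query language `(C, CQ)`. -/
def pep (C : Set (Finset TGD)) : Set (Set (Finset Atom × CQ × List ℕ)) := epP '' C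

/-- `(C1, CQ) ≤_pep (C2, CQ)`. -/
def pepLE (C1 C2 : Set (Finset TGD)) : Prop := pep C1 ⊆ pep C2

/-- `C1 ⪯ C2` for classes of TGDs: every `Σ ∈ C1` can be rewritten into some
`Σ' ∈ C2` giving the same certain answers for all databases over the common
extensional schema and all CQs over the common schema. -/
def classLE (C1 C2 : Set (Finset TGD)) : Prop :=
  ∀ S ∈ C1, ∃ S' ∈ C2, ∀ (D : Finset Atom) (q : CQ),
    DBover D (edbP S ∩ edbP S') → CQ.wf q → CQover q (schP S ∩ schP S') →
    cert q D S = cert q D S'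


/-! ### Auxiliary lemmas -/

lemma isVar_exists {t : Term'} (h : Term'.isVarB t = true) : ∃ v, t = Term'.var v := by
  rcases t with n | n | n
  · simp [Term'.isVarB] at h
  · simp [Term'.isVarB] at h
  · exact ⟨n, rfl⟩

lemma affected_false {S : Finset TGD} (hS : S ∈ FULL1) {p i : ℕ} (h : Affected S p i) :
    False := by
  induction h with
  | base σ hσ v hv a ha i hi => exact hv.2 ((hS.2 σ hσ).2 v hv.1)
  | step σ hσ v hb hh hall a ha i hi ih =>
      obtain ⟨b, hb1, hb2⟩ := hb
      obtain ⟨j, hj, hjv⟩ := List.mem_iff_getElem.mp hb2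
      exact ih b hb1 j (by rw [List.getElem?_eq_getElem hj, hjv])

lemma full1_sub_ward : FULL1 ⊆ WARDc := by
  intro S hS
  refine ⟨hS.1, ?_⟩
  intro σ hσ
  left
  rintro v ⟨hb, hh, hharm⟩
  apply hharm
  obtain ⟨b, hb1, hb2⟩ := hb
  obtain ⟨j, hj, hjv⟩ := List.mem_iff_getElem.mp hb2
  exact ⟨b, hb1, j, by rw [List.getElem?_eq_getElem hj, hjv],
    fun h => affected_false hS h⟩

/-! ### The separating warded program and queries -/

def sigma0 : TGD :=
  ⟨{(0, [Term'.var 0])}, {(1, [Term'.var 0, Term'.var 1])}⟩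

def Sigma0 : Finset TGD := {sigma0}

def D0 : Finset Atom := {(0, [Term'.cst 1])}

def qx : CQ := ⟨[Term'.var 0], {(1, [Term'.var 0, Term'.var 1])}⟩

def qd : CQ := ⟨[], {(1, [Term'.var 0, Term'.var 0])}⟩

lemma qx_wf : CQ.wf qx := by
  constructor
  · intro a ha t ht
    simp [qx] at ha; subst ha
    simp at ht
    rcases ht with rfl | rfl <;> rfl
  · intro t ht; simp [qx] at ht; subst ht; rfl

lemma qd_wf : CQ.wf qd := by
  constructor
  · intro a ha t ht
    simp [qd] at ha; subst ha
    simp at ht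
    rcases ht with rfl | rfl <;> rfl
  · intro t ht; simp [qd] at ht

lemma sigma0_warded : Sigma0 ∈ WARDc := by
  constructor
  · intro σ hσ
    simp [Sigma0] at hσ; subst hσ
    intro a ha t ht
    simp [sigma0] at ha
    rcases ha with rfl | rfl <;> simp at ht
    · subst ht; rfl
    · rcases ht with rfl | rfl <;> rfl
  · intro σ hσ
    simp [Sigma0] at hσ; subst hσ
    right
    refine ⟨(0, [Term'.var 0]), by simp [sigma0], ?_, ?_⟩
    · rintro v ⟨⟨a, ha, hva⟩, -, -⟩
      simp [sigma0] at ha; subst ha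
      exact hva
    · rintro v hv ⟨a, ha, hva⟩
      rw [Finset.mem_erase] at ha
      simp [sigma0] at ha

lemma tripleA_mem : ((D0, qx, [1]) : Finset Atom × CQ × List ℕ) ∈ epP Sigma0 := by
  refine ⟨⟨?_, ?_⟩, qx_wf, ?_, rfl, ?_, ?_⟩
  · intro a ha; simp [D0] at ha; subst ha
    intro t ht; simp at ht; subst ht; rfl
  · intro a ha; simp [D0] at ha; subst ha
    refine ⟨⟨sigma0, by simp [Sigma0], Or.inl ⟨(0, [Term'.var 0]), by simp [sigma0], rfl⟩⟩, ?_⟩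
    intro σ hσ hocc
    simp [Sigma0] at hσ; subst hσ
    obtain ⟨b, hb, hb1⟩ := hocc
    simp [sigma0] at hb; subst hb
    simp at hb1
  · intro a ha; simp [qx] at ha; subst ha
    exact ⟨sigma0, by simp [Sigma0], Or.inr ⟨(1, [Term'.var 0, Term'.var 1]), by simp [sigma0], rfl⟩⟩
  · intro n hn; simp at hn; subst hn
    exact ⟨(0, [Term'.cst 1]), by simp [D0], by simp⟩
  · intro I hDI hsat
    have hs := hsat sigma0 (by simp [Sigma0])
    set h0 : Term' → Term' := fun t => if Term'.isVarB t then Term'.cst 1 else t with hh0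
    have hcp0 : constPres h0 := by
      intro n; simp [hh0, Term'.isVarB, Term'.cst]
    have hbody : ∀ a ∈ sigma0.body, mapAtom h0 a ∈ I := by
      intro a ha; simp [sigma0] at ha; subst ha
      have : mapAtom h0 (0, [Term'.var 0]) = (0, [Term'.cst 1]) := by
        simp [mapAtom, hh0, Term'.isVarB, Term'.var]
      rw [this]
      exact hDI (by simp [D0])
    obtain ⟨h', hcp', hag, hhead⟩ := hs h0 hcp0 hbody
    have h'v0 : h' (Term'.var 0) = Term'.cst 1 := by
      rw [hag 0 ⟨(0, [Term'.var 0]), by simp [sigma0], by simp⟩]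
      simp [hh0, Term'.isVarB, Term'.var]
    refine ⟨h', hcp', ?_, ?_⟩
    · intro a ha; simp [qx] at ha; subst ha
      exact hhead _ (by simp [sigma0])
    · simp [qx, h'v0, Term'.cst]

lemma tripleB_not : ((D0, qd, []) : Finset Atom × CQ × List ℕ) ∉ epP Sigma0 := by
  rintro ⟨-, -, -, -, -, hcert⟩
  set Istar : Set Atom :=
    {((0 : ℕ), [Term'.cst 1]), ((1 : ℕ), [Term'.cst 1, Term'.nul 0])} with hIstar
  have hDI : ↑D0 ⊆ Istar := by
    intro a ha; simp [D0] at ha; subst ha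
    exact Set.mem_insert _ _
  have hsat : ∀ σ ∈ Sigma0, satTGD Istar σ := by
    intro σ hσ; simp [Sigma0] at hσ; subst hσ
    intro h hcp hbody
    have hb := hbody (0, [Term'.var 0]) (by simp [sigma0])
    simp [mapAtom, hIstar, Term'.cst, Term'.nul] at hb
    have hb1 : h (Term'.var 0) = Term'.cst 1 := hb
    refine ⟨fun t => if t = Term'.var 1 then Term'.nul 0 else h t, ?_, ?_, ?_⟩
    · intro n; simp [Term'.cst, Term'.var]; exact hcp n
    · intro v hv
      obtain ⟨a, ha, hva⟩ := hv
      simp [sigma0] at ha; subst ha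
      simp [Term'.var] at hva; subst hva
      simp [Term'.var]
    · intro a ha; simp [sigma0] at ha; subst ha
      show ((1:ℕ), [(if Term'.var 0 = Term'.var 1 then Term'.nul 0 else h (Term'.var 0)),
        (if Term'.var 1 = Term'.var 1 then Term'.nul 0 else h (Term'.var 1))]) ∈ Istar
      rw [if_neg (by decide), if_pos rfl, hb1]
      exact Set.mem_insert_of_mem _ rfl
  obtain ⟨h, hcp, hat, -⟩ := hcert Istar hDI hsat
  have := hat (1, [Term'.var 0, Term'.var 0]) (by simp [qd])
  simp [mapAtom, hIstar, Term'.cst, Term'.nul] at this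
  obtain ⟨t1, t2⟩ := this
  rw [t1] at t2
  exact Sum.inl_ne_inr t2

/-- For a full single-head program, `[1] ∈ cert qx D0 S'` forces `[] ∈ cert qd D0 S'`. -/
lemma full_certqd {S' : Finset TGD} (hS' : S' ∈ FULL1)
    (hcx : ([1] : List ℕ) ∈ cert qx D0 S') : ([] : List ℕ) ∈ cert qd D0 S' := by
  intro I hDI hsat
  set Iad : Set Atom := {a | ∀ t ∈ a.2, t = Term'.cst 1} with hIad
  have hD' : ↑D0 ⊆ I ∩ Iad := by
    intro a ha
    refine ⟨hDI ha, ?_⟩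
    simp [D0] at ha; subst ha
    intro t ht; simp at ht; exact ht
  have hsat' : ∀ σ ∈ S', satTGD (I ∩ Iad) σ := by
    intro σ hσ h hcp hbody
    refine ⟨h, hcp, fun v _ => rfl, ?_⟩
    intro a ha
    have hvar : ∀ t ∈ a.2, ∃ v, t = Term'.var v ∧ occursIn σ.body v := by
      intro t ht
      obtain ⟨v, rfl⟩ := isVar_exists (hS'.1 σ hσ a (Finset.mem_union_right _ ha) t ht)
      exact ⟨v, rfl, (hS'.2 σ hσ).2 v ⟨a, ha, ht⟩⟩
    constructor
    · obtain ⟨h'', hcp'', hag, hhead⟩ := hsat σ hσ h hcp (fun b hb => (hbody b hb).1)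
      have heqa : mapAtom h'' a = mapAtom h a := by
        unfold mapAtom
        refine congrArg _ (List.map_congr_left ?_)
        intro t ht
        obtain ⟨v, rfl, hvb⟩ := hvar t ht
        exact hag v hvb
      rw [← heqa]
      exact hhead a ha
    · intro t' ht'
      have ht'' : t' ∈ a.2.map h := ht'
      obtain ⟨t, ht, rfl⟩ := List.mem_map.mp ht''
      obtain ⟨v, rfl, b, hbm, hvb⟩ := hvar t ht
      have := (hbody b hbm).2
      exact this _ (List.mem_map_of_mem (f := h) hvb)
  obtain ⟨h, hcp, hat, hout⟩ := hcx (I ∩ Iad) hD' hsat'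
  have hmem := hat (1, [Term'.var 0, Term'.var 1]) (by simp [qx])
  have hc1 : h (Term'.var 1) = Term'.cst 1 := by
    have := hmem.2
    exact this _ (by simp [mapAtom])
  have hc0 : h (Term'.var 0) = Term'.cst 1 := by
    have := hmem.2
    exact this _ (by simp [mapAtom])
  have hR : ((1 : ℕ), [Term'.cst 1, Term'.cst 1]) ∈ I := by
    have := hmem.1
    simpa [mapAtom, hc0, hc1] using this
  refine ⟨fun t => if t = Term'.var 0 then Term'.cst 1 else t, ?_, ?_, rfl⟩
  · intro n; simp [Term'.cst, Term'.var]
  · intro a ha; simp [qd] at ha; subst ha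
    have : mapAtom (fun t => if t = Term'.var 0 then Term'.cst 1 else t)
        (1, [Term'.var 0, Term'.var 0]) = (1, [Term'.cst 1, Term'.cst 1]) := by
      simp [mapAtom]
    rw [this]; exact hR

/-- `DATALOG <_pep (WARD, CQ)`. -/
theorem datalog_lt_pep_warded :
    pepLE FULL1 WARDc ∧ ¬ pepLE WARDc FULL1 := by
  constructor
  · rintro X ⟨S, hS, rfl⟩
    exact ⟨S, full1_sub_ward hS, rfl⟩
  · intro hle
    obtain ⟨S', hS', heq⟩ := hle ⟨Sigma0, sigma0_warded, rfl⟩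
    have hA : ((D0, qx, [1]) : Finset Atom × CQ × List ℕ) ∈ epP S' := by
      rw [heq]; exact tripleA_mem
    obtain ⟨hDB, hwfx, hCQx, -, -, hcx⟩ := hA
    have hcd := full_certqd hS' hcx
    have hB : ((D0, qd, []) : Finset Atom × CQ × List ℕ) ∈ epP S' := by
      refine ⟨hDB, qd_wf, ?_, rfl, by simp, hcd⟩
      intro a ha; simp [qd] at ha; subst ha
      exact hCQx (1, [Term'.var 0, Term'.var 1]) (by simp [qx])
    rw [heq] at hB
    exact tripleB_not hB
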